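/- Let M be an optimal n×n k-uniform binary matrix with n ≥ 2. Then the matrix obtained from M by exchanging columns C_1 and C_2 is optimal, and the matrix obtained from M by exchanging columns C_{n−1} and C_n is optimal. -/

import Mathlib

/-- `M` is a binary (0/1) matrix. -/
def IsBinary {n : ℕ} (M : Fin n → Fin n → ℕ) : Prop :=
  ∀ i j, M i j = 0 ∨ M i j = 1

/-- Every row and every column of `M` contains exactly `k` entries equal to `1`. -/
def IsUniform {n : ℕ} (k : ℕ) (M : Fin n → Fin n → ℕ) : Prop :=
  (∀ i, (Finset.univ.filter fun j => M i j = 1).card = k) ∧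
  (∀ j, (Finset.univ.filter fun i => M i j = 1).card = k)

/-- Partial row sum `S_{i,j}`: sum of the entries of row `i` in columns `≤ j`. -/
def RowSum {n : ℕ} (M : Fin n → Fin n → ℕ) (i j : Fin n) : ℕ :=
  ∑ l ∈ Finset.Iic j, M i l

/-- An assignment mapping between columns `j` and `j'`: a bijection from
`{i : M i j = 1}` onto `{i : M i j' = 1}`. -/
def IsAssignment {n : ℕ} (M : Fin n → Fin n → ℕ) (j j' : Fin n) (φ : Fin n → Fin n) : Prop :=
  Set.BijOn φ {i | M i j = 1} {i | M i j' = 1}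

/-- Condition (2): `S_{φ(i),j} ≤ S_{i,j}` for all `i` in the domain. -/
def Cond2 {n : ℕ} (M : Fin n → Fin n → ℕ) (j : Fin n) (φ : Fin n → Fin n) : Prop :=
  ∀ i, M i j = 1 → RowSum M (φ i) j ≤ RowSum M i j

/-- Condition (1): `φ(i) = i` exactly when `m_{i,j} = m_{i,j'} = 1`. -/
def Cond1 {n : ℕ} (M : Fin n → Fin n → ℕ) (j j' : Fin n) (φ : Fin n → Fin n) : Prop :=
  ∀ i, M i j = 1 → (φ i = i ↔ (M i j = 1 ∧ M i j' = 1))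

/-- `M` is optimal: it is `k`-uniform for some `k`, and between each pair of consecutive
columns there is an assignment mapping satisfying Condition (2). -/
def Optimal {n : ℕ} (M : Fin n → Fin n → ℕ) : Prop :=
  (∃ k, IsUniform k M) ∧
  ∀ j : ℕ, ∀ hj : j + 1 < n, ∃ φ : Fin n → Fin n,
    IsAssignment M ⟨j, Nat.lt_of_succ_lt hj⟩ ⟨j + 1, hj⟩ φ ∧
    Cond2 M ⟨j, Nat.lt_of_succ_lt hj⟩ φ

/-- exchanging the first two columns, or the last two columns, of an
optimal `k`-uniform binary matrix yields an optimal matrix. -/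

lemma swap_mem_iff {n : ℕ} {s : Finset (Fin n)} {a b : Fin n} (ha : a ∈ s) (hb : b ∈ s)
    (i : Fin n) : Equiv.swap a b i ∈ s ↔ i ∈ s := by
  rcases eq_or_ne i a with rfl | hia
  · simp [ha, hb]
  rcases eq_or_ne i b with rfl | hib
  · simp [ha, hb]
  · rw [Equiv.swap_apply_of_ne_of_ne hia hib]

lemma sum_swap_eq {n : ℕ} (f : Fin n → ℕ) (s : Finset (Fin n)) {a b : Fin n}
    (ha : a ∈ s) (hb : b ∈ s) :
    ∑ l ∈ s, f (Equiv.swap a b l) = ∑ l ∈ s, f l :=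
  Finset.sum_equiv (Equiv.swap a b) (fun i => (swap_mem_iff ha hb i).symm) (fun _ _ => rfl)

lemma card_swap_filter {n : ℕ} (p : Fin n → Prop) [DecidablePred p] (a b : Fin n) :
    (Finset.univ.filter fun j => p (Equiv.swap a b j)).card = (Finset.univ.filter p).card :=
  Finset.card_equiv (Equiv.swap a b) (by simp)

lemma exists_bij {n : ℕ} (A C E : Finset (Fin n)) (hEA : E ⊆ A) (hEC : E ⊆ C)
    (hcard : A.card = C.card) :
    ∃ ψ : Fin n → Fin n, (∀ i ∈ E, ψ i = i) ∧
      (∀ i ∈ A, i ∉ E → ψ i ∈ C ∧ ψ i ∉ E) ∧ Set.BijOn ψ ↑A ↑C := by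
  classical
  have hc : (A \ E).card = (C \ E).card := by
    rw [Finset.card_sdiff_of_subset hEA, Finset.card_sdiff_of_subset hEC, hcard]
  set e := Finset.equivOfCardEq hc with he
  set ψ : Fin n → Fin n := fun i => if h : i ∈ A \ E then ((e ⟨i, h⟩ : Fin n)) else i with hψ
  have h1 : ∀ i ∈ E, ψ i = i := by
    intro i hi
    have h : i ∉ A \ E := by simp [hi]
    simp only [hψ, dif_neg h]
  have h2 : ∀ i ∈ A, i ∉ E → ψ i ∈ C ∧ ψ i ∉ E := by
    intro i hiA hiE
    have h : i ∈ A \ E := Finset.mem_sdiff.2 ⟨hiA, hiE⟩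
    have hmem : ((e ⟨i, h⟩ : Fin n)) ∈ C \ E := (e ⟨i, h⟩).2
    have hv : ψ i = ((e ⟨i, h⟩ : Fin n)) := by simp only [hψ, dif_pos h]
    rw [hv]
    exact ⟨(Finset.mem_sdiff.1 hmem).1, (Finset.mem_sdiff.1 hmem).2⟩
  refine ⟨ψ, h1, h2, ?_, ?_, ?_⟩
  · intro x hx
    by_cases hxE : x ∈ E
    · rw [h1 x hxE]; exact Finset.mem_coe.2 (hEC hxE)
    · exact Finset.mem_coe.2 (h2 x (Finset.mem_coe.1 hx) hxE).1
  · intro x hx y hy hxy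
    by_cases hxE : x ∈ E <;> by_cases hyE : y ∈ E
    · rw [h1 x hxE, h1 y hyE] at hxy; exact hxy
    · rw [h1 x hxE] at hxy
      exact absurd (hxy ▸ hxE) (h2 y (Finset.mem_coe.1 hy) hyE).2
    · rw [h1 y hyE] at hxy
      exact absurd (hxy ▸ hyE) (h2 x (Finset.mem_coe.1 hx) hxE).2
    · have hx' : x ∈ A \ E := Finset.mem_sdiff.2 ⟨Finset.mem_coe.1 hx, hxE⟩
      have hy' : y ∈ A \ E := Finset.mem_sdiff.2 ⟨Finset.mem_coe.1 hy, hyE⟩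
      have hvx : ψ x = ((e ⟨x, hx'⟩ : Fin n)) := by simp only [hψ, dif_pos hx']
      have hvy : ψ y = ((e ⟨y, hy'⟩ : Fin n)) := by simp only [hψ, dif_pos hy']
      rw [hvx, hvy] at hxy
      have := e.injective (Subtype.coe_injective hxy)
      exact congrArg Subtype.val this
  · intro y hy
    by_cases hyE : y ∈ E
    · exact ⟨y, Finset.mem_coe.2 (hEA hyE), h1 y hyE⟩
    · have hy' : y ∈ C \ E := Finset.mem_sdiff.2 ⟨Finset.mem_coe.1 hy, hyE⟩
      set x := e.symm ⟨y, hy'⟩ with hx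
      refine ⟨(x : Fin n), Finset.mem_coe.2 (Finset.mem_sdiff.1 x.2).1, ?_⟩
      have hv : ψ (x : Fin n) = ((e ⟨(x : Fin n), x.2⟩ : Fin n)) := by
        simp only [hψ, dif_pos x.2]
      rw [hv, Subtype.coe_eta, hx, e.apply_symm_apply]

lemma coe_filter_one {n : ℕ} (f : Fin n → ℕ) :
    (↑(Finset.univ.filter fun i => f i = 1) : Set (Fin n)) = {i | f i = 1} := by
  ext x; simp

lemma eq_swap_first {n : ℕ} (hn : 2 ≤ n) (M : Fin n → Fin n → ℕ) :
    (fun i (j : Fin n) => if (j : ℕ) = 0 then M i ⟨1, Nat.lt_of_lt_of_le (by norm_num) hn⟩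
      else if (j : ℕ) = 1 then M i ⟨0, Nat.lt_of_lt_of_le (by norm_num) hn⟩ else M i j)
    = fun i (j : Fin n) => M i (Equiv.swap (⟨0, Nat.lt_of_lt_of_le (by norm_num) hn⟩ : Fin n) ⟨1, Nat.lt_of_lt_of_le (by norm_num) hn⟩ j) := by
  funext i j
  obtain ⟨jv, hjv⟩ := j
  rw [Equiv.swap_apply_def]
  simp only [Fin.mk.injEq]
  split_ifs <;> simp_all

lemma eq_swap_last {n : ℕ} (hn : 2 ≤ n) (M : Fin n → Fin n → ℕ) :
    (fun i (j : Fin n) => if (j : ℕ) = n - 2 then M i ⟨n - 1, Nat.sub_lt (Nat.lt_of_lt_of_le (by norm_num) hn) (by norm_num)⟩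
      else if (j : ℕ) = n - 1 then M i ⟨n - 2, Nat.sub_lt (Nat.lt_of_lt_of_le (by norm_num) hn) (by norm_num)⟩ else M i j)
    = fun i (j : Fin n) => M i (Equiv.swap (⟨n - 2, Nat.sub_lt (Nat.lt_of_lt_of_le (by norm_num) hn) (by norm_num)⟩ : Fin n) ⟨n - 1, Nat.sub_lt (Nat.lt_of_lt_of_le (by norm_num) hn) (by norm_num)⟩ j) := by
  funext i j
  obtain ⟨jv, hjv⟩ := j
  rw [Equiv.swap_apply_def]
  simp only [Fin.mk.injEq]
  split_ifs <;> first | rfl | omega | simp_all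

lemma optimal_swap_first {n k : ℕ} (M : Fin n → Fin n → ℕ)
    (hbin : IsBinary M) (hunif : IsUniform k M) (hopt : Optimal M)
    (a0 a1 : Fin n) (h0 : (a0 : ℕ) = 0) (h1 : (a1 : ℕ) = 1) :
    Optimal (fun i (j : Fin n) => M i (Equiv.swap a0 a1 j)) := by
  classical
  obtain ⟨hrow, hcol⟩ := hunif
  have hn : 2 ≤ n := by have := a1.isLt; omega
  have hb1 : ∀ i j, M i j ≤ 1 := fun i j => by rcases hbin i j with h | h <;> omega
  set N := fun i (j : Fin n) => M i (Equiv.swap a0 a1 j) with hN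
  refine ⟨⟨k, ?_, ?_⟩, ?_⟩
  · intro i
    simp only [hN]
    exact (card_swap_filter (fun l => M i l = 1) a0 a1).trans (hrow i)
  · intro j
    simp only [hN]
    exact hcol (Equiv.swap a0 a1 j)
  · intro j hj
    set j0 : Fin n := ⟨j, Nat.lt_of_succ_lt hj⟩ with hj0def
    set j1 : Fin n := ⟨j + 1, hj⟩ with hj1def
    have hj0v : (j0 : ℕ) = j := rfl
    have hj1v : (j1 : ℕ) = j + 1 := rfl
    by_cases hc0 : j = 0
    · -- boundary case: columns a0, a1 of N are columns a1, a0 of M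
      have e0 : j0 = a0 := Fin.ext (by omega)
      have e1 : j1 = a1 := Fin.ext (by omega)
      obtain ⟨ψ, -, -, hbij⟩ := exists_bij
        (Finset.univ.filter fun i => M i a1 = 1)
        (Finset.univ.filter fun i => M i a0 = 1) ∅
        (Finset.empty_subset _) (Finset.empty_subset _)
        (by rw [hcol, hcol])
      rw [coe_filter_one, coe_filter_one] at hbij
      refine ⟨ψ, ?_, ?_⟩
      · show Set.BijOn ψ {i | N i j0 = 1} {i | N i j1 = 1}
        simp only [hN, e0, e1, Equiv.swap_apply_left, Equiv.swap_apply_right]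
        exact hbij
      · intro i hi
        have hIic : Finset.Iic j0 = {j0} := by
          ext l
          simp only [Finset.mem_Iic, Finset.mem_singleton, Fin.le_def, Fin.ext_iff]
          omega
        have hRS : ∀ x, RowSum N x j0 = M x a1 := by
          intro x
          show ∑ l ∈ Finset.Iic j0, N x l = M x a1
          rw [hIic, Finset.sum_singleton]
          simp only [hN, e0, Equiv.swap_apply_left]
        rw [hRS, hRS]
        have hi' : M i a1 = 1 := by
          have : N i j0 = 1 := hi
          simpa only [hN, e0, Equiv.swap_apply_left] using this
        rw [hi']
        exact hb1 _ _
    · by_cases hc1 : j = 1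
      · -- middle case
        have hn3 : 3 ≤ n := by omega
        have e0 : j0 = a1 := Fin.ext (by omega)
        set a2 : Fin n := ⟨2, by omega⟩ with ha2
        have h2v : (a2 : ℕ) = 2 := rfl
        have e1 : j1 = a2 := Fin.ext (by omega)
        have ea2 : Equiv.swap a0 a1 a2 = a2 :=
          Equiv.swap_apply_of_ne_of_ne
            (by rw [Ne, Fin.ext_iff]; omega) (by rw [Ne, Fin.ext_iff]; omega)
        set A := Finset.univ.filter fun i => M i a0 = 1 with hA
        set B := Finset.univ.filter fun i => M i a1 = 1 with hB
        set C := Finset.univ.filter fun i => M i a2 = 1 with hC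
        obtain ⟨ψ, hψE, hψA, hbij⟩ := exists_bij A C ((A ∩ B) ∩ C)
          (fun x hx => by
            simp only [Finset.mem_inter] at hx; exact hx.1.1)
          (fun x hx => by
            simp only [Finset.mem_inter] at hx; exact hx.2)
          (by rw [hA, hC, hcol, hcol])
        rw [hA, hC, coe_filter_one, coe_filter_one] at hbij
        refine ⟨ψ, ?_, ?_⟩
        · show Set.BijOn ψ {i | N i j0 = 1} {i | N i j1 = 1}
          simp only [hN, e0, e1, Equiv.swap_apply_right, ea2]
          exact hbij
        · intro i hi
          have hi' : M i a0 = 1 := by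
            have : N i j0 = 1 := hi
            simpa only [hN, e0, Equiv.swap_apply_right] using this
          have hIic : Finset.Iic j0 = {a0, a1} := by
            ext l
            simp only [Finset.mem_Iic, Finset.mem_insert, Finset.mem_singleton,
              Fin.le_def, Fin.ext_iff]
            omega
          have hRS : ∀ x, RowSum N x j0 = M x a1 + M x a0 := by
            intro x
            show ∑ l ∈ Finset.Iic j0, N x l = M x a1 + M x a0
            rw [hIic, Finset.sum_pair (by rw [Ne, Fin.ext_iff]; omega)]
            simp only [hN, Equiv.swap_apply_left, Equiv.swap_apply_right]
          rw [hRS, hRS]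
          by_cases hiE : i ∈ (A ∩ B) ∩ C
          · rw [hψE i hiE]
          · have hiA : i ∈ A := by
              rw [hA]; exact Finset.mem_filter.2 ⟨Finset.mem_univ i, hi'⟩
            obtain ⟨hpC, hpE⟩ := hψA i hiA hiE
            have hone : M (ψ i) a0 = 0 ∨ M (ψ i) a1 = 0 := by
              rcases hbin (ψ i) a0 with u | u
              · exact Or.inl u
              rcases hbin (ψ i) a1 with v | v
              · exact Or.inr v
              exfalso
              apply hpE
              rw [Finset.mem_inter, Finset.mem_inter, hA, hB]
              refine ⟨⟨Finset.mem_filter.2 ⟨Finset.mem_univ _, u⟩,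
                Finset.mem_filter.2 ⟨Finset.mem_univ _, v⟩⟩, hpC⟩
            have := hb1 (ψ i) a0
            have := hb1 (ψ i) a1
            omega
      · -- unchanged case: j ≥ 2
        have h2j : 2 ≤ j := by omega
        obtain ⟨φ, hφa, hφ2⟩ := hopt.2 j hj
        have e0 : Equiv.swap a0 a1 j0 = j0 :=
          Equiv.swap_apply_of_ne_of_ne
            (by rw [Ne, Fin.ext_iff]; omega) (by rw [Ne, Fin.ext_iff]; omega)
        have e1 : Equiv.swap a0 a1 j1 = j1 :=
          Equiv.swap_apply_of_ne_of_ne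
            (by rw [Ne, Fin.ext_iff]; omega) (by rw [Ne, Fin.ext_iff]; omega)
        have hRS : ∀ x, RowSum N x j0 = RowSum M x j0 := by
          intro x
          show ∑ l ∈ Finset.Iic j0, M x (Equiv.swap a0 a1 l) = ∑ l ∈ Finset.Iic j0, M x l
          exact sum_swap_eq (M x) (Finset.Iic j0)
            (Finset.mem_Iic.2 (by rw [Fin.le_def]; omega))
            (Finset.mem_Iic.2 (by rw [Fin.le_def]; omega))
        refine ⟨φ, ?_, ?_⟩
        · show Set.BijOn φ {i | N i j0 = 1} {i | N i j1 = 1}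
          simp only [hN, e0, e1]
          exact hφa
        · intro i hi
          have hi' : M i j0 = 1 := by
            have : N i j0 = 1 := hi
            simpa only [hN, e0] using this
          rw [hRS, hRS]
          exact hφ2 i hi'

lemma optimal_swap_last {n k : ℕ} (hn : 2 ≤ n) (M : Fin n → Fin n → ℕ)
    (hbin : IsBinary M) (hunif : IsUniform k M) (hopt : Optimal M)
    (p q : Fin n) (hp : (p : ℕ) = n - 2) (hq : (q : ℕ) = n - 1) :
    Optimal (fun i (j : Fin n) => M i (Equiv.swap p q j)) := by
  classical
  obtain ⟨hrow, hcol⟩ := hunif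
  have hb1 : ∀ i j, M i j ≤ 1 := fun i j => by rcases hbin i j with h | h <;> omega
  have hpq : p ≠ q := by rw [Ne, Fin.ext_iff]; omega
  have hrowtot : ∀ x, ∑ l, M x l = k := by
    intro x
    calc ∑ l, M x l = ∑ l, (if M x l = 1 then 1 else 0) :=
          Finset.sum_congr rfl fun l _ => by rcases hbin x l with h | h <;> simp [h]
      _ = (Finset.univ.filter fun l => M x l = 1).card := (Finset.card_filter _ _).symm
      _ = k := hrow x
  set N := fun i (j : Fin n) => M i (Equiv.swap p q j) with hN
  have htot : ∀ x, ∑ l, N x l = k := by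
    intro x
    show ∑ l, M x (Equiv.swap p q l) = k
    rw [Equiv.sum_comp]
    exact hrowtot x
  refine ⟨⟨k, ?_, ?_⟩, ?_⟩
  · intro i
    simp only [hN]
    exact (card_swap_filter (fun l => M i l = 1) p q).trans (hrow i)
  · intro j
    simp only [hN]
    exact hcol _
  · intro j hj
    set j0 : Fin n := ⟨j, Nat.lt_of_succ_lt hj⟩ with hj0def
    set j1 : Fin n := ⟨j + 1, hj⟩ with hj1def
    have hj0v : (j0 : ℕ) = j := rfl
    have hj1v : (j1 : ℕ) = j + 1 := rfl
    by_cases hcA : j = n - 2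
    · -- boundary case
      have e0 : j0 = p := Fin.ext (by omega)
      have e1 : j1 = q := Fin.ext (by omega)
      obtain ⟨ψ, -, hψA, hbij⟩ := exists_bij
        (Finset.univ.filter fun i => M i q = 1)
        (Finset.univ.filter fun i => M i p = 1) ∅
        (Finset.empty_subset _) (Finset.empty_subset _)
        (by rw [hcol, hcol])
      rw [coe_filter_one, coe_filter_one] at hbij
      refine ⟨ψ, ?_, ?_⟩
      · show Set.BijOn ψ {i | N i j0 = 1} {i | N i j1 = 1}
        simp only [hN, e0, e1, Equiv.swap_apply_left, Equiv.swap_apply_right]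
        exact hbij
      · intro i hi
        have hi' : M i q = 1 := by
          have : N i j0 = 1 := hi
          simpa only [hN, e0, Equiv.swap_apply_left] using this
        have hIic : Finset.Iic j0 = Finset.univ.erase q := by
          ext l
          simp only [Finset.mem_Iic, Finset.mem_erase, Finset.mem_univ, and_true,
            Ne, Fin.le_def, Fin.ext_iff]
          omega
        have hRS : ∀ x, RowSum N x j0 + M x p = k := by
          intro x
          show (∑ l ∈ Finset.Iic j0, N x l) + M x p = k
          rw [hIic]
          have hq' : N x q = M x p := by
            show M x (Equiv.swap p q q) = M x p
            rw [Equiv.swap_apply_right]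
          rw [← hq', Finset.sum_erase_add Finset.univ _ (Finset.mem_univ q)]
          exact htot x
        have h1 := hRS (ψ i)
        have h2 := hRS i
        obtain ⟨hpC, -⟩ := hψA i
          (Finset.mem_filter.2 ⟨Finset.mem_univ i, hi'⟩) (Finset.notMem_empty i)
        have h3 : M (ψ i) p = 1 := (Finset.mem_filter.1 hpC).2
        have h4 := hb1 i p
        omega
    · by_cases hcB : j + 1 = n - 2
      · -- middle case
        have e1 : j1 = p := Fin.ext (by omega)
        have e00 : Equiv.swap p q j0 = j0 :=
          Equiv.swap_apply_of_ne_of_ne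
            (by rw [Ne, Fin.ext_iff]; omega) (by rw [Ne, Fin.ext_iff]; omega)
        set A := Finset.univ.filter fun i => M i j0 = 1 with hA
        set Bp := Finset.univ.filter fun i => M i p = 1 with hBp
        set C := Finset.univ.filter fun i => M i q = 1 with hC
        obtain ⟨ψ, hψE, hψA, hbij⟩ := exists_bij A C ((A ∩ Bp) ∩ C)
          (fun x hx => by simp only [Finset.mem_inter] at hx; exact hx.1.1)
          (fun x hx => by simp only [Finset.mem_inter] at hx; exact hx.2)
          (by rw [hA, hC, hcol, hcol])
        rw [hA, hC, coe_filter_one, coe_filter_one] at hbij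
        refine ⟨ψ, ?_, ?_⟩
        · show Set.BijOn ψ {i | N i j0 = 1} {i | N i j1 = 1}
          simp only [hN, e00, e1, Equiv.swap_apply_left]
          exact hbij
        · intro i hi
          have hi' : M i j0 = 1 := by
            have : N i j0 = 1 := hi
            simpa only [hN, e00] using this
          have hRS : ∀ x, RowSum N x j0 = RowSum M x j0 := by
            intro x
            refine Finset.sum_congr rfl fun l hl => ?_
            have hl' := Finset.mem_Iic.1 hl
            rw [Fin.le_def] at hl'
            show M x (Equiv.swap p q l) = M x l
            rw [Equiv.swap_apply_of_ne_of_ne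
              (by rw [Ne, Fin.ext_iff]; omega) (by rw [Ne, Fin.ext_iff]; omega)]
          have hIic : Finset.Iic j0 = Finset.univ \ {p, q} := by
            ext l
            simp only [Finset.mem_Iic, Finset.mem_sdiff, Finset.mem_univ, true_and,
              Finset.mem_insert, Finset.mem_singleton, Fin.le_def, Fin.ext_iff, not_or]
            omega
          have hkey : ∀ x, RowSum M x j0 + (M x p + M x q) = k := by
            intro x
            show (∑ l ∈ Finset.Iic j0, M x l) + (M x p + M x q) = k
            rw [hIic, ← Finset.sum_pair hpq, Finset.sum_sdiff (Finset.subset_univ _)]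
            exact hrowtot x
          rw [hRS, hRS]
          by_cases hiE : i ∈ (A ∩ Bp) ∩ C
          · rw [hψE i hiE]
          · have hiA : i ∈ A := by
              rw [hA]; exact Finset.mem_filter.2 ⟨Finset.mem_univ i, hi'⟩
            obtain ⟨hpC, hpE⟩ := hψA i hiA hiE
            have h3 : M (ψ i) q = 1 := by
              rw [hC] at hpC; exact (Finset.mem_filter.1 hpC).2
            have hone : M i p = 0 ∨ M i q = 0 := by
              rcases hbin i p with u | u
              · exact Or.inl u
              rcases hbin i q with v | v
              · exact Or.inr v
              exfalso
              apply hiE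
              rw [Finset.mem_inter, Finset.mem_inter, hBp, hC]
              exact ⟨⟨hiA, Finset.mem_filter.2 ⟨Finset.mem_univ _, u⟩⟩,
                Finset.mem_filter.2 ⟨Finset.mem_univ _, v⟩⟩
            have h1 := hkey (ψ i)
            have h2 := hkey i
            have b1 := hb1 (ψ i) p
            have b2 := hb1 (ψ i) q
            have b3 := hb1 i p
            have b4 := hb1 i q
            omega
      · -- unchanged case: j + 1 < n - 2
        obtain ⟨φ, hφa, hφ2⟩ := hopt.2 j hj
        have e0 : Equiv.swap p q j0 = j0 :=
          Equiv.swap_apply_of_ne_of_ne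
            (by rw [Ne, Fin.ext_iff]; omega) (by rw [Ne, Fin.ext_iff]; omega)
        have e1 : Equiv.swap p q j1 = j1 :=
          Equiv.swap_apply_of_ne_of_ne
            (by rw [Ne, Fin.ext_iff]; omega) (by rw [Ne, Fin.ext_iff]; omega)
        have hRS : ∀ x, RowSum N x j0 = RowSum M x j0 := by
          intro x
          refine Finset.sum_congr rfl fun l hl => ?_
          have hl' := Finset.mem_Iic.1 hl
          rw [Fin.le_def] at hl'
          show M x (Equiv.swap p q l) = M x l
          rw [Equiv.swap_apply_of_ne_of_ne
            (by rw [Ne, Fin.ext_iff]; omega) (by rw [Ne, Fin.ext_iff]; omega)]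
        refine ⟨φ, ?_, ?_⟩
        · show Set.BijOn φ {i | N i j0 = 1} {i | N i j1 = 1}
          simp only [hN, e0, e1]
          exact hφa
        · intro i hi
          have hi' : M i j0 = 1 := by
            have : N i j0 = 1 := hi
            simpa only [hN, e0] using this
          rw [hRS, hRS]
          exact hφ2 i hi'

theorem stmt_7 {n k : ℕ} (hn : 2 ≤ n) (M : Fin n → Fin n → ℕ)
    (hbin : IsBinary M) (hunif : IsUniform k M) (hopt : Optimal M) :
    Optimal (fun i j => if (j : ℕ) = 0 then M i ⟨1, by omega⟩
      else if (j : ℕ) = 1 then M i ⟨0, by omega⟩ else M i j) ∧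
    Optimal (fun i j => if (j : ℕ) = n - 2 then M i ⟨n - 1, by omega⟩
      else if (j : ℕ) = n - 1 then M i ⟨n - 2, by omega⟩ else M i j) := by
  constructor
  · rw [eq_swap_first hn M]
    exact optimal_swap_first M hbin hunif hopt _ _ rfl rfl
  · rw [eq_swap_last hn M]
    exact optimal_swap_last hn M hbin hunif hopt _ _ rfl rfl
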